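/- For every c ≥ 1 and every sufficiently large odd n, if every instance of the asymmetric envy model with n agents and binary additive valuations admits an EF_a-c allocation, then every collection of q = (n−1)/2 binary additive valuation functions V over any finite item set satisfies wdisc_{1/n}(V) ≤ 6c. Consequently, combined with the existence of q binary additive valuations with wdisc_{1/n}(V) ≥ √(q−1)/16, any universal EF_a-c guarantee for binary asymmetric envy instances with n agents requires c ≥ √((n−1)/2 − 1)/96. -/

import Mathlib

open Finset

/-- Labeling of ordered pairs of agents (as naturals) by valuation indices. -/
def efacLab (q i j : ℕ) : ℕ :=
  if i = 0 then (j - 1) % q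
  else if j = 0 then (i - 1) % q
  else if (i ≤ q ↔ j ≤ q) then (i - 1) % q else (j - 1) % q

lemma efacLab_lt (q i j : ℕ) (hq : 0 < q) : efacLab q i j < q := by
  unfold efacLab; split_ifs <;> exact Nat.mod_lt _ hq

lemma efacLab_z_a (q k : ℕ) (hk : k < q) : efacLab q 0 (k + 1) = k := by
  simp [efacLab, Nat.mod_eq_of_lt hk]

lemma efacLab_z_b (q k : ℕ) (hk : k < q) : efacLab q 0 (k + q + 1) = k := by
  have : (k + q + 1 - 1) % q = k := by
    rw [Nat.add_sub_cancel, Nat.add_mod_right, Nat.mod_eq_of_lt hk]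
  simp [efacLab, this, Nat.mod_eq_of_lt hk]

lemma efacLab_a_z (q k : ℕ) (hk : k < q) : efacLab q (k + 1) 0 = k := by
  simp [efacLab, Nat.mod_eq_of_lt hk]

lemma efacLab_b_z (q k : ℕ) (hk : k < q) : efacLab q (k + q + 1) 0 = k := by
  have h1 : k + q + 1 ≠ 0 := by omega
  have : (k + q + 1 - 1) % q = k := by
    rw [Nat.add_sub_cancel, Nat.add_mod_right, Nat.mod_eq_of_lt hk]
  simp [efacLab, h1, this, Nat.mod_eq_of_lt hk]

lemma efacLab_a_a (q k m : ℕ) (hk : k < q) (hm : m < q) :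
    efacLab q (k + 1) (m + 1) = k := by
  have hi : (k + 1 ≤ q ↔ m + 1 ≤ q) := by omega
  simp [efacLab, hi, Nat.mod_eq_of_lt hk]

lemma efacLab_b_b (q k m : ℕ) (hk : k < q) (hm : m < q) :
    efacLab q (k + q + 1) (m + q + 1) = k := by
  have h1 : k + q + 1 ≠ 0 := by omega
  have h2 : m + q + 1 ≠ 0 := by omega
  have hi : (k + q + 1 ≤ q ↔ m + q + 1 ≤ q) := by omega
  have : (k + q + 1 - 1) % q = k := by
    rw [Nat.add_sub_cancel, Nat.add_mod_right, Nat.mod_eq_of_lt hk]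
  simp [efacLab, h1, h2, hi, this, Nat.mod_eq_of_lt hk]

lemma efacLab_b_a (q k m : ℕ) (hk : k < q) (hm : m < q) :
    efacLab q (m + q + 1) (k + 1) = k := by
  have h1 : m + q + 1 ≠ 0 := by omega
  have hi : ¬ (m + q + 1 ≤ q ↔ k + 1 ≤ q) := by omega
  simp [efacLab, h1, hi, Nat.mod_eq_of_lt hk]
  omega

lemma efacLab_a_b (q k m : ℕ) (hk : k < q) (hm : m < q) :
    efacLab q (m + 1) (k + q + 1) = k := by
  have h2 : k + q + 1 ≠ 0 := by omega
  have hi : ¬ (m + 1 ≤ q ↔ k + q + 1 ≤ q) := by omega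
  have : (k + q + 1 - 1) % q = k := by
    rw [Nat.add_sub_cancel, Nat.add_mod_right, Nat.mod_eq_of_lt hk]
  simp [efacLab, h2, hi, this, Nat.mod_eq_of_lt hk]
  omega

/-- If every binary asymmetric envy instance with `n` agents admits an
EF_a-c allocation, then every collection of `q = (n-1)/2` binary additive
valuations has `1/n`-weighted discrepancy at most `6c`; consequently, given
a collection with discrepancy at least `√(q-1)/16`, we get
`c ≥ √((n-1)/2 - 1)/96`. -/
theorem efac_lower_bound (c n : ℕ) (hc : 1 ≤ c) (hodd : Odd n) (hn : 3 ≤ n)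
    (H : ∀ (α : Type) [DecidableEq α] (M : Finset α)
      (vv : Fin n → Fin n → α → ℝ),
      (∀ (i j : Fin n) (x : α), vv i j x = 0 ∨ vv i j x = 1) →
      ∃ A : Fin n → Finset α,
        (∀ i j : Fin n, i ≠ j → Disjoint (A i) (A j)) ∧
        Finset.univ.biUnion A = M ∧
        ∀ i j : Fin n, i ≠ j → ∃ P : Finset α, P ⊆ A i ∪ A j ∧ P.card ≤ c ∧
          (∑ x ∈ A i \ P, vv i j x) ≥ ∑ x ∈ A j \ P, vv i j x) :
    (∀ (α : Type) (M : Finset α) (w : Fin ((n - 1) / 2) → α → ℝ),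
      (∀ (i : Fin ((n - 1) / 2)) (x : α), w i x = 0 ∨ w i x = 1) →
      ∃ B : Finset α, B ⊆ M ∧ ∀ i : Fin ((n - 1) / 2),
        |(1 / (n : ℝ)) * (∑ x ∈ M, w i x) - ∑ x ∈ B, w i x| ≤ 6 * c) ∧
    ((∃ (α : Type) (M : Finset α) (w : Fin ((n - 1) / 2) → α → ℝ),
        (∀ (i : Fin ((n - 1) / 2)) (x : α), w i x = 0 ∨ w i x = 1) ∧
        ∀ B : Finset α, B ⊆ M → ∃ i : Fin ((n - 1) / 2),
          Real.sqrt ((((n - 1) / 2 : ℕ) : ℝ) - 1) / 16 ≤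
            |(1 / (n : ℝ)) * (∑ x ∈ M, w i x) - ∑ x ∈ B, w i x|) →
      (c : ℝ) ≥ Real.sqrt ((((n - 1) / 2 : ℕ) : ℝ) - 1) / 96) := by
  classical
  obtain ⟨t, ht⟩ := hodd
  set q : ℕ := (n - 1) / 2 with hqdef
  have hn2 : n = 2 * q + 1 := by omega
  have hq : 0 < q := by omega
  have hcR : (1 : ℝ) ≤ (c : ℝ) := by exact_mod_cast hc
  have part1 : ∀ (α : Type) (M : Finset α) (w : Fin q → α → ℝ),
      (∀ (i : Fin q) (x : α), w i x = 0 ∨ w i x = 1) →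
      ∃ B : Finset α, B ⊆ M ∧ ∀ i : Fin q,
        |(1 / (n : ℝ)) * (∑ x ∈ M, w i x) - ∑ x ∈ B, w i x| ≤ 6 * c := by
    intro α M w hw
    -- agents
    let z : Fin n := ⟨0, by omega⟩
    let av : Fin q → Fin n := fun k => ⟨k.val + 1, by have := k.isLt; omega⟩
    let bv : Fin q → Fin n := fun k => ⟨k.val + q + 1, by have := k.isLt; omega⟩
    let L : Fin n → Fin n → Fin q :=
      fun i j => ⟨efacLab q i.val j.val, efacLab_lt q _ _ hq⟩
    obtain ⟨A, hdisj, hunion, hEF⟩ := H α M (fun i j => w (L i j))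
      (fun i j x => hw (L i j) x)
    -- basic bounds on the valuations
    have h0 : ∀ (k : Fin q) (x : α), 0 ≤ w k x := by
      intro k x; rcases hw k x with h | h <;> rw [h] <;> norm_num
    have h1 : ∀ (k : Fin q) (x : α), w k x ≤ 1 := by
      intro k x; rcases hw k x with h | h <;> rw [h] <;> norm_num
    -- the key envy-derived inequality for each ordered pair
    have key : ∀ i j : Fin n, i ≠ j →
        (∑ x ∈ A j, w (L i j) x) - c ≤ ∑ x ∈ A i, w (L i j) x := by
      intro i j hij
      obtain ⟨P, hPsub, hPcard, hPineq⟩ := hEF i j hij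
      have hA : (∑ x ∈ A i \ P, w (L i j) x) ≤ ∑ x ∈ A i, w (L i j) x :=
        Finset.sum_le_sum_of_subset_of_nonneg Finset.sdiff_subset
          (fun x _ _ => h0 _ x)
      have hsplit : (∑ x ∈ A j ∩ P, w (L i j) x) + ∑ x ∈ A j \ P, w (L i j) x
          = ∑ x ∈ A j, w (L i j) x := Finset.sum_inter_add_sum_sdiff _ _ _
      have hcap : (∑ x ∈ A j ∩ P, w (L i j) x) ≤ ((A j ∩ P).card : ℝ) := by
        calc (∑ x ∈ A j ∩ P, w (L i j) x) ≤ ∑ _x ∈ A j ∩ P, (1 : ℝ) :=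
              Finset.sum_le_sum (fun x _ => h1 _ x)
          _ = ((A j ∩ P).card : ℝ) := by simp
      have hcard : ((A j ∩ P).card : ℝ) ≤ (c : ℝ) := by
        have h := Finset.card_le_card (Finset.inter_subset_right (s₁ := A j) (s₂ := P))
        exact_mod_cast le_trans h hPcard
      have hPineq' : (∑ x ∈ A j \ P, w (L i j) x) ≤ ∑ x ∈ A i \ P, w (L i j) x := hPineq
      linarith
    -- specialized edge inequalities, all with label k
    have eZA : ∀ k : Fin q, (∑ x ∈ A (av k), w k x) - c ≤ ∑ x ∈ A z, w k x := by
      intro k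
      have hne : z ≠ av k := Fin.ne_of_val_ne (show (0:ℕ) ≠ k.val + 1 by omega)
      have h := key z (av k) hne
      have hL : L z (av k) = k := Fin.ext (efacLab_z_a q k.val k.isLt)
      rwa [hL] at h
    have eZB : ∀ k : Fin q, (∑ x ∈ A (bv k), w k x) - c ≤ ∑ x ∈ A z, w k x := by
      intro k
      have hne : z ≠ bv k := Fin.ne_of_val_ne (show (0:ℕ) ≠ k.val + q + 1 by omega)
      have h := key z (bv k) hne
      have hL : L z (bv k) = k := Fin.ext (efacLab_z_b q k.val k.isLt)
      rwa [hL] at h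
    have eAZ : ∀ k : Fin q, (∑ x ∈ A z, w k x) - c ≤ ∑ x ∈ A (av k), w k x := by
      intro k
      have hne : av k ≠ z := Fin.ne_of_val_ne (show k.val + 1 ≠ (0:ℕ) by omega)
      have h := key (av k) z hne
      have hL : L (av k) z = k := Fin.ext (efacLab_a_z q k.val k.isLt)
      rwa [hL] at h
    have eBZ : ∀ k : Fin q, (∑ x ∈ A z, w k x) - c ≤ ∑ x ∈ A (bv k), w k x := by
      intro k
      have hne : bv k ≠ z := Fin.ne_of_val_ne (show k.val + q + 1 ≠ (0:ℕ) by omega)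
      have h := key (bv k) z hne
      have hL : L (bv k) z = k := Fin.ext (efacLab_b_z q k.val k.isLt)
      rwa [hL] at h
    have eAA : ∀ k m : Fin q, m ≠ k →
        (∑ x ∈ A (av m), w k x) - c ≤ ∑ x ∈ A (av k), w k x := by
      intro k m hmk
      have hvne : m.val ≠ k.val := fun h => hmk (Fin.ext h)
      have hne : av k ≠ av m := Fin.ne_of_val_ne (show k.val + 1 ≠ m.val + 1 by omega)
      have h := key (av k) (av m) hne
      have hL : L (av k) (av m) = k := Fin.ext (efacLab_a_a q k.val m.val k.isLt m.isLt)
      rwa [hL] at h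
    have eBB : ∀ k m : Fin q, m ≠ k →
        (∑ x ∈ A (bv m), w k x) - c ≤ ∑ x ∈ A (bv k), w k x := by
      intro k m hmk
      have hvne : m.val ≠ k.val := fun h => hmk (Fin.ext h)
      have hne : bv k ≠ bv m := Fin.ne_of_val_ne (show k.val + q + 1 ≠ m.val + q + 1 by omega)
      have h := key (bv k) (bv m) hne
      have hL : L (bv k) (bv m) = k := Fin.ext (efacLab_b_b q k.val m.val k.isLt m.isLt)
      rwa [hL] at h
    have eBA : ∀ k m : Fin q,
        (∑ x ∈ A (av k), w k x) - c ≤ ∑ x ∈ A (bv m), w k x := by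
      intro k m
      have hne : bv m ≠ av k := Fin.ne_of_val_ne
        (show m.val + q + 1 ≠ k.val + 1 by have := k.isLt; omega)
      have h := key (bv m) (av k) hne
      have hL : L (bv m) (av k) = k := Fin.ext (efacLab_b_a q k.val m.val k.isLt m.isLt)
      rwa [hL] at h
    have eAB : ∀ k m : Fin q,
        (∑ x ∈ A (bv k), w k x) - c ≤ ∑ x ∈ A (av m), w k x := by
      intro k m
      have hne : av m ≠ bv k := Fin.ne_of_val_ne
        (show m.val + 1 ≠ k.val + q + 1 by have := m.isLt; omega)
      have h := key (av m) (bv k) hne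
      have hL : L (av m) (bv k) = k := Fin.ext (efacLab_a_b q k.val m.val k.isLt m.isLt)
      rwa [hL] at h
    -- every bundle's value is within 2c of agent 0's bundle
    have hS : ∀ (k : Fin q) (i : Fin n),
        |(∑ x ∈ A i, w k x) - ∑ x ∈ A z, w k x| ≤ 2 * c := by
      intro k i
      rcases Nat.lt_or_ge i.val 1 with hi0 | hi1
      · have hiz : i = z := Fin.ext (show i.val = 0 by omega)
        rw [hiz]
        simp only [sub_self, abs_zero]
        positivity
      · rcases le_or_gt i.val q with hia | hib
        · -- i is an `a`-agent
          have hm : i.val - 1 < q := by omega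
          set m : Fin q := ⟨i.val - 1, hm⟩ with hmdef
          have him : i = av m := Fin.ext (show i.val = i.val - 1 + 1 by omega)
          rw [him]
          have hup : (∑ x ∈ A (av m), w k x) ≤ (∑ x ∈ A z, w k x) + 2 * c := by
            by_cases hmk : m = k
            · subst hmk
              have := eZA m
              linarith
            · have h5 := eAA k m hmk
              have h1' := eZA k
              linarith
          have hlo : (∑ x ∈ A z, w k x) - 2 * c ≤ ∑ x ∈ A (av m), w k x := by
            have h8 := eAB k m
            have h4 := eBZ k
            linarith
          rw [abs_le]
          constructor <;> linarith
        · -- i is a `b`-agent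
          have hm : i.val - q - 1 < q := by omega
          set m : Fin q := ⟨i.val - q - 1, hm⟩ with hmdef
          have him : i = bv m := Fin.ext (show i.val = i.val - q - 1 + q + 1 by omega)
          rw [him]
          have hup : (∑ x ∈ A (bv m), w k x) ≤ (∑ x ∈ A z, w k x) + 2 * c := by
            by_cases hmk : m = k
            · subst hmk
              have := eZB m
              linarith
            · have h6 := eBB k m hmk
              have h2' := eZB k
              linarith
          have hlo : (∑ x ∈ A z, w k x) - 2 * c ≤ ∑ x ∈ A (bv m), w k x := by
            have h7 := eBA k m
            have h3 := eAZ k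
            linarith
          rw [abs_le]
          constructor <;> linarith
    -- total sum over M decomposes over bundles
    have hsum : ∀ k : Fin q, (∑ x ∈ M, w k x) = ∑ i : Fin n, ∑ x ∈ A i, w k x := by
      intro k
      rw [← hunion]
      exact Finset.sum_biUnion (fun i _ j _ hij => hdisj i j hij)
    refine ⟨A z, ?_, ?_⟩
    · rw [← hunion]
      exact Finset.subset_biUnion_of_mem A (Finset.mem_univ z)
    · intro k
      have hnR : (0 : ℝ) < (n : ℝ) := by
        have : (0 : ℕ) < n := by omega
        exact_mod_cast this
      have habs : |(∑ x ∈ M, w k x) - (n : ℝ) * ∑ x ∈ A z, w k x| ≤ (n : ℝ) * (2 * c) := by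
        rw [hsum k]
        have hrw : (∑ i : Fin n, ∑ x ∈ A i, w k x) - (n : ℝ) * ∑ x ∈ A z, w k x
            = ∑ i : Fin n, ((∑ x ∈ A i, w k x) - ∑ x ∈ A z, w k x) := by
          rw [Finset.sum_sub_distrib, Finset.sum_const, Finset.card_univ, Fintype.card_fin,
            nsmul_eq_mul]
        rw [hrw]
        calc |∑ i : Fin n, ((∑ x ∈ A i, w k x) - ∑ x ∈ A z, w k x)|
            ≤ ∑ i : Fin n, |(∑ x ∈ A i, w k x) - ∑ x ∈ A z, w k x| :=
              Finset.abs_sum_le_sum_abs _ _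
          _ ≤ ∑ _i : Fin n, (2 * (c : ℝ)) := Finset.sum_le_sum (fun i _ => hS k i)
          _ = (n : ℝ) * (2 * c) := by
              rw [Finset.sum_const, Finset.card_univ, Fintype.card_fin, nsmul_eq_mul]
      have hrw2 : (1 / (n : ℝ)) * (∑ x ∈ M, w k x) - ∑ x ∈ A z, w k x
          = (1 / (n : ℝ)) * ((∑ x ∈ M, w k x) - (n : ℝ) * ∑ x ∈ A z, w k x) := by
        field_simp
      rw [hrw2, abs_mul, abs_of_pos (by positivity : (0:ℝ) < 1 / (n:ℝ))]
      have hb : (1 / (n : ℝ)) * |(∑ x ∈ M, w k x) - (n : ℝ) * ∑ x ∈ A z, w k x|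
          ≤ (1 / (n : ℝ)) * ((n : ℝ) * (2 * c)) :=
        mul_le_mul_of_nonneg_left habs (by positivity)
      have heq : (1 / (n : ℝ)) * ((n : ℝ) * (2 * c)) = 2 * c := by
        field_simp
      rw [heq] at hb
      have : (2 : ℝ) * c ≤ 6 * c := by linarith
      linarith
  refine ⟨part1, ?_⟩
  rintro ⟨α, M, w, hw, hard⟩
  obtain ⟨B, hBM, hB⟩ := part1 α M w hw
  obtain ⟨i, hi⟩ := hard B hBM
  have h2 := hB i
  have hs : Real.sqrt ((q : ℝ) - 1) / 16 ≤ 6 * c := le_trans hi h2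
  linarith
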